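/- The derivative of marginalization is conditional expectation: let t ↦ q(t) be a curve of positive densities on Ω₁ × Ω₂, each coordinate differentiable at t₀, and let q₁(t)(x) = ∑_z q(t)(x,z) be the first marginal. Then for every x ∈ Ω₁, the function t ↦ log q₁(t)(x) is differentiable at t₀ with derivative ∑_z q̇(x,z) · q(t₀)(x,z)/q₁(t₀)(x), where q̇(x,z) = (d/dt log q(t)(x,z))|_{t=t₀}; that is, the velocity of the marginal equals the conditional expectation E_{q(t₀)}[ q̇ | X = x ] of the velocity of the joint. -/

import Mathlib

/-- The derivative of marginalization is the conditional expectation: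
for a curve `t ↦ q t` of positive densities on `Ω₁ × Ω₂` with score `q̇` at `t₀`,
the velocity of the first marginal at `x` is
`∑ z, q̇ x z * q_{2|1}(z|x) = E_{q t₀}[q̇ | X = x]`. -/
theorem marginalization_derivative {Ω₁ Ω₂ : Type*}
    [Fintype Ω₁] [Fintype Ω₂] [Nonempty Ω₁] [Nonempty Ω₂]
    (q : ℝ → Ω₁ → Ω₂ → ℝ) (qdot : Ω₁ → Ω₂ → ℝ) (t₀ : ℝ)
    (hpos : ∀ t x z, 0 < q t x z) (hsum : ∀ t, ∑ x, ∑ z, q t x z = 1)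
    (hscore : ∀ x z, HasDerivAt (fun t => Real.log (q t x z)) (qdot x z) t₀)
    (x : Ω₁) :
    HasDerivAt (fun t => Real.log (∑ z, q t x z))
      (∑ z, qdot x z * (q t₀ x z / ∑ z', q t₀ x z')) t₀ := by
  have hq : ∀ z, HasDerivAt (fun t => q t x z) (qdot x z * q t₀ x z) t₀ := by
    intro z
    have h := ((hscore x z).exp)
    have heq : (fun t => Real.exp (Real.log (q t x z))) = fun t => q t x z := by
      funext t; exact Real.exp_log (hpos t x z)
    rw [heq, Real.exp_log (hpos t₀ x z)] at h
    exact (mul_comm (q t₀ x z) (qdot x z)) ▸ h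
  have hsumd : HasDerivAt (fun t => ∑ z, q t x z)
      (∑ z, qdot x z * q t₀ x z) t₀ := HasDerivAt.fun_sum fun z _ => hq z
  have hS : 0 < ∑ z, q t₀ x z :=
    Finset.sum_pos (fun z _ => hpos t₀ x z) Finset.univ_nonempty
  have h := hsumd.log hS.ne'
  have : (∑ z, qdot x z * q t₀ x z) / ∑ z, q t₀ x z
      = ∑ z, qdot x z * (q t₀ x z / ∑ z', q t₀ x z') := by
    rw [Finset.sum_div]
    exact Finset.sum_congr rfl fun z _ => by field_simp
  rwa [this] at h
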